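/- arXiv:2402.13390 — 2 statements merged into one kernel-verified Lean document; each statement's English description precedes it below -/
import Mathlib

section
/- A Hermitian twisted cartesian product (g1 ⋈ g2, J, k) is Kähler (i.e., its fundamental form ω(u,v) = k(Ju,v) satisfies dω = 0) if and only if (g1, J1, k1) and (g2, J2, k2) are both Kähler and both representations are skew-adjoint: ρ1(x)* = −ρ1(x) for all x ∈ g1 (with respect to k2) and ρ2(a)* = −ρ2(a) for all a ∈ g2 (with respect to k1). -/
open scoped BigOperators

section TCPDefs

variable {V V₁ V₂ W : Type*} [AddCommGroup V] [Module ℝ V]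
  [AddCommGroup V₁] [Module ℝ V₁] [AddCommGroup V₂] [Module ℝ V₂]
  [AddCommGroup W] [Module ℝ W]

/-- Real-bilinearity of a two-argument map. -/
def IsBilinMap (f : V₁ → V₂ → W) : Prop :=
  (∀ x y z, f (x + y) z = f x z + f y z) ∧ (∀ (c : ℝ) x z, f (c • x) z = c • f x z) ∧
  (∀ x y z, f x (y + z) = f x y + f x z) ∧ (∀ (c : ℝ) x z, f x (c • z) = c • f x z)

/-- The Jacobi identity for a bracket. -/
def Jacobi (l : V → V → V) : Prop :=
  ∀ u v w, l (l u v) w + l (l v w) u + l (l w u) v = 0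

/-- A (real) Lie bracket: bilinear, antisymmetric, Jacobi. -/
def IsLieBracket (l : V → V → V) : Prop :=
  IsBilinMap l ∧ (∀ u v, l u v = -l v u) ∧ Jacobi l

/-- D is a derivation of the bracket l. -/
def IsDeriv (l : V → V → V) (D : V → V) : Prop :=
  ∀ u v, D (l u v) = l (D u) v + l u (D v)

/-- Compatibility of the couple (ρ1, ρ2). -/
def Compat (ρ1 : V₁ → V₂ → V₂) (ρ2 : V₂ → V₁ → V₁) : Prop :=
  (∀ (x : V₁) (a b : V₂), ρ1 (ρ2 a x) b = ρ1 (ρ2 b x) a) ∧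
  (∀ (x y : V₁) (a : V₂), ρ2 (ρ1 x a) y = ρ2 (ρ1 y a) x)

/-- The twisted cartesian product bracket on V₁ × V₂. -/
def twBr (l1 : V₁ → V₁ → V₁) (l2 : V₂ → V₂ → V₂)
    (ρ1 : V₁ → V₂ → V₂) (ρ2 : V₂ → V₁ → V₁) (u v : V₁ × V₂) : V₁ × V₂ :=
  (l1 u.1 v.1 + ρ2 u.2 v.1 - ρ2 v.2 u.1, l2 u.2 v.2 + ρ1 u.1 v.2 - ρ1 v.1 u.2)

/-- The product almost complex structure. -/
def prodJ (J1 : V₁ → V₁) (J2 : V₂ → V₂) (u : V₁ × V₂) : V₁ × V₂ := (J1 u.1, J2 u.2)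

/-- The product metric. -/
def prodK (k1 : V₁ → V₁ → ℝ) (k2 : V₂ → V₂ → ℝ) (u v : V₁ × V₂) : ℝ :=
  k1 u.1 v.1 + k2 u.2 v.2

/-- Nijenhuis tensor of J with respect to the bracket l. -/
def nijenhuis (l : V → V → V) (J : V → V) (u v : V) : V :=
  l (J u) (J v) - l u v - J (l (J u) v + l u (J v))

/-- Fundamental 2-form ω(u,v) = k(Ju, v). -/
def fund (k : V → V → ℝ) (J : V → V) (u v : V) : ℝ := k (J u) v

/-- Chevalley–Eilenberg differential of a 2-form. -/
def d2 (l : V → V → V) (ω : V → V → ℝ) (u v w : V) : ℝ :=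
  -ω (l u v) w + ω (l u w) v - ω (l v w) u

/-- Chevalley–Eilenberg differential of a 1-form. -/
def d1 (l : V → V → V) (θ : V → ℝ) (u v : V) : ℝ := -θ (l u v)

/-- Wedge product of a 1-form with a 2-form, evaluated on three vectors. -/
def wedge12 (θ : V → ℝ) (ω : V → V → ℝ) (u v w : V) : ℝ :=
  θ u * ω v w - θ v * ω u w + θ w * ω u v

/-- The Koszul formula characterizing the Levi-Civita product of (g, k). -/
def IsLeviCivita (k : V → V → ℝ) (l : V → V → V) (nab : V → V → V) : Prop :=
  ∀ u v w, 2 * k (nab u v) w = k (l u v) w - k (l v w) u - k (l u w) v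

/-- Codifferential of a 2-form ω relative to a family E (an orthonormal basis)
    and a Levi-Civita product nab:  d*ω(X) = −Σ_i (∇_{E_i}ω)(E_i, X). -/
def codiff {ι : Type*} [Fintype ι] (E : ι → V) (nab : V → V → V)
    (ω : V → V → ℝ) (X : V) : ℝ :=
  -∑ i, (-(ω (nab (E i) (E i)) X) - ω (E i) (nab (E i) X))

/-- Lee form θ = −d*ω ∘ J. -/
def leeForm {ι : Type*} [Fintype ι] (E : ι → V) (nab : V → V → V)
    (k : V → V → ℝ) (J : V → V) (X : V) : ℝ :=
  -codiff E nab (fund k J) (J X)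

/-- A family is orthonormal with respect to k. -/
def Orthonormal' {ι : Type*} [DecidableEq ι] (k : V → V → ℝ) (E : ι → V) : Prop :=
  ∀ i j, k (E i) (E j) = if i = j then 1 else 0

/-- k is an inner product: symmetric, bilinear, positive definite. -/
def IsInner (k : V → V → ℝ) : Prop :=
  IsBilinMap k ∧ (∀ u v, k u v = k v u) ∧ (∀ u, u ≠ 0 → 0 < k u u)

/-- A Hermitian structure on the Lie algebra (V, l). -/
def IsHermitian (l : V → V → V) (J : V → V) (k : V → V → ℝ) : Prop :=
  IsInner k ∧ (∀ u, J (J u) = -u) ∧ (∀ u v, nijenhuis l J u v = 0) ∧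
  (∀ u v, k (J u) (J v) = k u v)

end TCPDefs

section MyHelpers

variable {V₁ V₂ W : Type*}
  [AddCommGroup V₁] [Module ℝ V₁] [AddCommGroup V₂] [Module ℝ V₂]
  [AddCommGroup W] [Module ℝ W]

theorem IsBilinMap.zl {f : V₁ → V₂ → W} (hf : IsBilinMap f) (z : V₂) : f 0 z = 0 := by
  have := hf.2.1 0 0 z
  simpa using this

theorem IsBilinMap.zr {f : V₁ → V₂ → W} (hf : IsBilinMap f) (x : V₁) : f x 0 = 0 := by
  have := hf.2.2.2 0 x 0
  simpa using this

theorem IsBilinMap.nl {f : V₁ → V₂ → W} (hf : IsBilinMap f) (x : V₁) (z : V₂) :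
    f (-x) z = -f x z := by
  have := hf.2.1 (-1) x z
  simpa [neg_smul, one_smul] using this

theorem IsBilinMap.sl {f : V₁ → V₂ → W} (hf : IsBilinMap f) (x y : V₁) (z : V₂) :
    f (x - y) z = f x z - f y z := by
  rw [sub_eq_add_neg, hf.1, hf.nl, sub_eq_add_neg]

theorem my_skew_of_cond {V : Type*} [AddCommGroup V] [Module ℝ V]
    (k : V → V → ℝ) (hk : IsBilinMap k) (hsym : ∀ u v, k u v = k v u)
    (J : V → V) (hJJ : ∀ u, J (J u) = -u) (hJk : ∀ u v, k (J u) (J v) = k u v)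
    (A : V → V) (hAJ : ∀ u, A (J u) = J (A u))
    (hcond : ∀ b c, k (J (A b)) c = k (J (A c)) b) :
    ∀ b c, k (A b) c = -(k b (A c)) := by
  intro b c
  have h := hcond (J b) c
  rw [hAJ b, hJJ (A b), hk.nl, hJk (A c) b, hsym (A c) b] at h
  linarith

theorem my_cond_of_skew {V : Type*} [AddCommGroup V] [Module ℝ V]
    (k : V → V → ℝ) (hk : IsBilinMap k) (hsym : ∀ u v, k u v = k v u)
    (J : V → V) (hJJ : ∀ u, J (J u) = -u) (hJk : ∀ u v, k (J u) (J v) = k u v)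
    (A : V → V) (hAJ : ∀ u, A (J u) = J (A u))
    (hskew : ∀ u v, k (A u) v = -(k u (A v))) :
    ∀ b c, k (J (A b)) c = k (J (A c)) b := by
  intro b c
  calc k (J (A b)) c = k (J (J (A b))) (J c) := (hJk _ _).symm
    _ = k (-(A b)) (J c) := by rw [hJJ]
    _ = -(k (A b) (J c)) := hk.nl _ _
    _ = k b (A (J c)) := by rw [hskew]; ring
    _ = k b (J (A c)) := by rw [hAJ]
    _ = k (J (A c)) b := hsym _ _

end MyHelpers

/-- a Hermitian twisted cartesian product is Kähler iff both
factors are Kähler and ρ1, ρ2 are skew-adjoint. -/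
theorem kaehler_iff_of_twisted_product
    {V₁ V₂ : Type*} [AddCommGroup V₁] [Module ℝ V₁] [FiniteDimensional ℝ V₁]
    [AddCommGroup V₂] [Module ℝ V₂] [FiniteDimensional ℝ V₂]
    (l1 : V₁ → V₁ → V₁) (l2 : V₂ → V₂ → V₂)
    (hl1 : IsLieBracket l1) (hl2 : IsLieBracket l2)
    (J1 : Module.End ℝ V₁) (J2 : Module.End ℝ V₂)
    (k1 : V₁ → V₁ → ℝ) (k2 : V₂ → V₂ → ℝ)
    (hH1 : IsHermitian l1 (⇑J1) k1) (hH2 : IsHermitian l2 (⇑J2) k2)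
    (ρ1 : V₁ →ₗ[ℝ] Module.End ℝ V₂) (ρ2 : V₂ →ₗ[ℝ] Module.End ℝ V₁)
    (hd1 : ∀ x, IsDeriv l2 (ρ1 x)) (hd2 : ∀ a, IsDeriv l1 (ρ2 a))
    (hrep1 : ∀ x y, ρ1 (l1 x y) = ρ1 x * ρ1 y - ρ1 y * ρ1 x)
    (hrep2 : ∀ a b, ρ2 (l2 a b) = ρ2 a * ρ2 b - ρ2 b * ρ2 a)
    (hcompat : Compat (fun x a => ρ1 x a) (fun a x => ρ2 a x))
    (hcomm1 : ∀ x : V₁, ρ1 x * J2 = J2 * ρ1 x)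
    (hcomm2 : ∀ a : V₂, ρ2 a * J1 = J1 * ρ2 a)
    (ρ1s : V₁ → V₂ → V₂) (hρ1s : ∀ x b c, k2 (ρ1s x b) c = k2 b (ρ1 x c))
    (ρ2s : V₂ → V₁ → V₁) (hρ2s : ∀ a y z, k1 (ρ2s a y) z = k1 y (ρ2 a z)) :
    (∀ u v w : V₁ × V₂,
      d2 (twBr l1 l2 (fun x a => ρ1 x a) (fun a x => ρ2 a x))
        (fund (prodK k1 k2) (prodJ (⇑J1) (⇑J2))) u v w = 0) ↔
      ((∀ x y z : V₁, d2 l1 (fund k1 (⇑J1)) x y z = 0) ∧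
       (∀ a b c : V₂, d2 l2 (fund k2 (⇑J2)) a b c = 0) ∧
       (∀ (x : V₁) (b : V₂), ρ1s x b = -(ρ1 x b)) ∧
       (∀ (a : V₂) (y : V₁), ρ2s a y = -(ρ2 a y))) := by
  obtain ⟨⟨hk1bil, hk1sym, hk1pos⟩, hJ1JJ, -, hJ1k⟩ := hH1
  obtain ⟨⟨hk2bil, hk2sym, hk2pos⟩, hJ2JJ, -, hJ2k⟩ := hH2
  obtain ⟨hl1bil, -, -⟩ := hl1
  obtain ⟨hl2bil, -, -⟩ := hl2
  have hc1 : ∀ (x : V₁) (b : V₂), ρ1 x (J2 b) = J2 (ρ1 x b) := by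
    intro x b
    have := DFunLike.congr_fun (hcomm1 x) b
    simpa [Module.End.mul_apply] using this
  have hc2 : ∀ (a : V₂) (y : V₁), ρ2 a (J1 y) = J1 (ρ2 a y) := by
    intro a y
    have := DFunLike.congr_fun (hcomm2 a) y
    simpa [Module.End.mul_apply] using this
  have master : ∀ (x : V₁) (a : V₂) (y : V₁) (b : V₂) (z : V₁) (c : V₂),
      d2 (twBr l1 l2 (fun x a => ρ1 x a) (fun a x => ρ2 a x))
        (fund (prodK k1 k2) (prodJ (⇑J1) (⇑J2))) (x, a) (y, b) (z, c)
      = d2 l1 (fund k1 (⇑J1)) x y z + d2 l2 (fund k2 (⇑J2)) a b c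
        + (- k1 (J1 (ρ2 a y)) z + k1 (J1 (ρ2 a z)) y
           + k1 (J1 (ρ2 b x)) z - k1 (J1 (ρ2 b z)) x
           - k1 (J1 (ρ2 c x)) y + k1 (J1 (ρ2 c y)) x)
        + (- k2 (J2 (ρ1 x b)) c + k2 (J2 (ρ1 x c)) b
           + k2 (J2 (ρ1 y a)) c - k2 (J2 (ρ1 z a)) b
           - k2 (J2 (ρ1 y c)) a + k2 (J2 (ρ1 z b)) a) := by
    intro x a y b z c
    simp only [d2, twBr, fund, prodK, prodJ, map_add, map_sub,
      hk1bil.1, hk1bil.sl, hk2bil.1, hk2bil.sl]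
    ring
  constructor
  · intro H
    have HA : ∀ (x : V₁) (b c : V₂), k2 (J2 (ρ1 x b)) c = k2 (J2 (ρ1 x c)) b := by
      intro x b c
      have h := H (x, 0) (0, b) (0, c)
      rw [master] at h
      have h1 : d2 l1 (fund k1 (⇑J1)) x 0 0 = 0 := by
        simp [d2, fund, hk1bil.zl, hk1bil.zr, hl1bil.zl, hl1bil.zr, map_zero]
      have h2 : d2 l2 (fund k2 (⇑J2)) 0 b c = 0 := by
        simp [d2, fund, hk2bil.zl, hk2bil.zr, hl2bil.zl, hl2bil.zr, map_zero]
      rw [h1, h2] at h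
      simp only [map_zero, LinearMap.zero_apply, hk1bil.zl, hk1bil.zr,
        hk2bil.zl, hk2bil.zr] at h
      linarith
    have HB : ∀ (a : V₂) (y z : V₁), k1 (J1 (ρ2 a y)) z = k1 (J1 (ρ2 a z)) y := by
      intro a y z
      have h := H (y, 0) (z, 0) (0, a)
      rw [master] at h
      have h1 : d2 l1 (fund k1 (⇑J1)) y z 0 = 0 := by
        simp [d2, fund, hk1bil.zl, hk1bil.zr, hl1bil.zl, hl1bil.zr, map_zero]
      have h2 : d2 l2 (fund k2 (⇑J2)) 0 0 a = 0 := by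
        simp [d2, fund, hk2bil.zl, hk2bil.zr, hl2bil.zl, hl2bil.zr, map_zero]
      rw [h1, h2] at h
      simp only [map_zero, LinearMap.zero_apply, hk1bil.zl, hk1bil.zr,
        hk2bil.zl, hk2bil.zr] at h
      linarith
    have hsk1 : ∀ (x : V₁) (b c : V₂), k2 (ρ1 x b) c = -(k2 b (ρ1 x c)) := fun x =>
      my_skew_of_cond k2 hk2bil hk2sym (⇑J2) hJ2JJ hJ2k (⇑(ρ1 x)) (hc1 x) (HA x)
    have hsk2 : ∀ (a : V₂) (y z : V₁), k1 (ρ2 a y) z = -(k1 y (ρ2 a z)) := fun a =>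
      my_skew_of_cond k1 hk1bil hk1sym (⇑J1) hJ1JJ hJ1k (⇑(ρ2 a)) (hc2 a) (HB a)
    have nondeg2 : ∀ v : V₂, (∀ c, k2 v c = 0) → v = 0 := by
      intro v hv
      by_contra hne
      have := hk2pos v hne
      rw [hv v] at this
      exact lt_irrefl 0 this
    have nondeg1 : ∀ v : V₁, (∀ c, k1 v c = 0) → v = 0 := by
      intro v hv
      by_contra hne
      have := hk1pos v hne
      rw [hv v] at this
      exact lt_irrefl 0 this
    refine ⟨?_, ?_, ?_, ?_⟩
    · intro x y z
      have h := H (x, 0) (y, 0) (z, 0)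
      rw [master] at h
      have h2 : d2 l2 (fund k2 (⇑J2)) (0 : V₂) 0 0 = 0 := by
        simp [d2, fund, hk2bil.zl, hk2bil.zr, hl2bil.zl, hl2bil.zr, map_zero]
      rw [h2] at h
      simpa only [map_zero, LinearMap.zero_apply, hk1bil.zl, hk1bil.zr,
        hk2bil.zl, hk2bil.zr, add_zero, zero_add, neg_zero, sub_zero] using h
    · intro a b c
      have h := H (0, a) (0, b) (0, c)
      rw [master] at h
      have h1 : d2 l1 (fund k1 (⇑J1)) (0 : V₁) 0 0 = 0 := by
        simp [d2, fund, hk1bil.zl, hk1bil.zr, hl1bil.zl, hl1bil.zr, map_zero]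
      rw [h1] at h
      simpa only [map_zero, LinearMap.zero_apply, hk1bil.zl, hk1bil.zr,
        hk2bil.zl, hk2bil.zr, add_zero, zero_add, neg_zero, sub_zero] using h
    · intro x b
      have key : ∀ c, k2 (ρ1s x b - -(ρ1 x b)) c = 0 := by
        intro c
        rw [hk2bil.sl, hρ1s x b c, hk2bil.nl, hsk1 x b c]
        ring
      exact sub_eq_zero.mp (nondeg2 _ key)
    · intro a y
      have key : ∀ c, k1 (ρ2s a y - -(ρ2 a y)) c = 0 := by
        intro c
        rw [hk1bil.sl, hρ2s a y c, hk1bil.nl, hsk2 a y c]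
        ring
      exact sub_eq_zero.mp (nondeg1 _ key)
  · rintro ⟨H1, H2, Hs1, Hs2⟩
    have hsk1 : ∀ (x : V₁) (b c : V₂), k2 (ρ1 x b) c = -(k2 b (ρ1 x c)) := by
      intro x b c
      have h := hρ1s x b c
      rw [Hs1 x b, hk2bil.nl] at h
      linarith
    have hsk2 : ∀ (a : V₂) (y z : V₁), k1 (ρ2 a y) z = -(k1 y (ρ2 a z)) := by
      intro a y z
      have h := hρ2s a y z
      rw [Hs2 a y, hk1bil.nl] at h
      linarith
    have HA : ∀ (x : V₁) (b c : V₂), k2 (J2 (ρ1 x b)) c = k2 (J2 (ρ1 x c)) b := fun x =>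
      my_cond_of_skew k2 hk2bil hk2sym (⇑J2) hJ2JJ hJ2k (⇑(ρ1 x)) (hc1 x) (hsk1 x)
    have HB : ∀ (a : V₂) (y z : V₁), k1 (J1 (ρ2 a y)) z = k1 (J1 (ρ2 a z)) y := fun a =>
      my_cond_of_skew k1 hk1bil hk1sym (⇑J1) hJ1JJ hJ1k (⇑(ρ2 a)) (hc2 a) (hsk2 a)
    rintro ⟨x, a⟩ ⟨y, b⟩ ⟨z, c⟩
    rw [master, H1, H2]
    have e1 := HB a y z
    have e2 := HB b x z
    have e3 := HB c x y
    have e4 := HA x b c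
    have e5 := HA y a c
    have e6 := HA z a b
    linarith
end

section
/- Let (g1 ⋈ g2, J, k) be a Hermitian twisted cartesian product, with Lee forms θ1, θ2 of (g1, J1, k1) and (g2, J2, k2). Then the Lee form θ of (g1 ⋈ g2, J, k) is given by θ(x) = θ1(x) − tr(ρ1(x)) for x ∈ g1 and θ(a) = θ2(a) − tr(ρ2(a)) for a ∈ g2, where tr(ρ1(x)) is the trace of ρ1(x) ∈ End(g2) and tr(ρ2(a)) of ρ2(a) ∈ End(g1). -/
open scoped BigOperators

section Aux

variable {V V₁ V₂ W : Type*} [AddCommGroup V] [Module ℝ V]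
  [AddCommGroup V₁] [Module ℝ V₁] [AddCommGroup V₂] [Module ℝ V₂]
  [AddCommGroup W] [Module ℝ W]

lemma IsBilinMap.zero_left {f : V₁ → V₂ → W} (h : IsBilinMap f) (z : V₂) :
    f 0 z = 0 := by
  have := h.2.1 0 0 z
  simpa using this

lemma IsBilinMap.zero_right {f : V₁ → V₂ → W} (h : IsBilinMap f) (x : V₁) :
    f x 0 = 0 := by
  have := h.2.2.2 0 x 0
  simpa using this

lemma IsBilinMap.neg_left {f : V₁ → V₂ → W} (h : IsBilinMap f) (x : V₁) (z : V₂) :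
    f (-x) z = -f x z := by
  have := h.2.1 (-1) x z
  simpa using this

lemma IsBilinMap.sum_smul_left {f : V₁ → V₂ → ℝ} (h : IsBilinMap f) {ι : Type*}
    (s : Finset ι) (c : ι → ℝ) (v : ι → V₁) (z : V₂) :
    f (∑ i ∈ s, c i • v i) z = ∑ i ∈ s, c i * f (v i) z := by
  classical
  induction s using Finset.induction_on with
  | empty => simpa using h.zero_left z
  | insert _ _ hx ih =>
      rw [Finset.sum_insert hx, h.1, h.2.1, ih, Finset.sum_insert hx, smul_eq_mul]

lemma trace_eq_sum_orthonormal {ι : Type*} [Fintype ι] [DecidableEq ι]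
    [FiniteDimensional ℝ V]
    {k : V → V → ℝ} (hk : IsBilinMap k) (b : Module.Basis ι ℝ V) (hb : Orthonormal' k ⇑b)
    (A : Module.End ℝ V) :
    LinearMap.trace ℝ V A = ∑ i, k (A (b i)) (b i) := by
  rw [LinearMap.trace_eq_matrix_trace ℝ b A, Matrix.trace]
  refine Finset.sum_congr rfl fun i _ => ?_
  have hA : A (b i) = ∑ j, b.repr (A (b i)) j • b j := (Module.Basis.sum_repr b (A (b i))).symm
  rw [Matrix.diag_apply, LinearMap.toMatrix_apply]
  conv_rhs => rw [hA]
  have hb' : ∀ i j, k (b i) (b j) = if i = j then 1 else 0 := hb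
  rw [hk.sum_smul_left]
  simp [hb', mul_ite]

lemma two_mul_leeForm {ι : Type*} [Fintype ι] {k : V → V → ℝ} {l : V → V → V}
    {J : V → V} (hsym : ∀ u v, k u v = k v u) (hJ : ∀ u v, k (J u) (J v) = k u v)
    {nab : V → V → V} (hnab : IsLeviCivita k l nab) (E : ι → V) (X : V) :
    2 * leeForm E nab k J X =
      -∑ i, ((k (l (E i) (E i)) X - k (l (E i) X) (E i) - k (l (E i) X) (E i)) +
        (k (l (E i) (J X)) (J (E i)) - k (l (J X) (J (E i))) (E i) -
          k (l (E i) (J (E i))) (J X))) := by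
  unfold leeForm codiff fund
  rw [neg_neg, Finset.mul_sum, ← Finset.sum_neg_distrib]
  refine Finset.sum_congr rfl fun i _ => ?_
  have h1 := hJ (nab (E i) (E i)) X
  have h2 := hsym (J (E i)) (nab (E i) (J X))
  have h3 := hnab (E i) (E i) X
  have h4 := hnab (E i) (J X) (J (E i))
  linarith

end Aux

/-- the Lee form of a Hermitian twisted cartesian product. -/
theorem lee_form_of_twisted_product
    {V₁ V₂ : Type*} [AddCommGroup V₁] [Module ℝ V₁] [FiniteDimensional ℝ V₁]
    [AddCommGroup V₂] [Module ℝ V₂] [FiniteDimensional ℝ V₂]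
    (l1 : V₁ → V₁ → V₁) (l2 : V₂ → V₂ → V₂)
    (hl1 : IsLieBracket l1) (hl2 : IsLieBracket l2)
    (J1 : Module.End ℝ V₁) (J2 : Module.End ℝ V₂)
    (k1 : V₁ → V₁ → ℝ) (k2 : V₂ → V₂ → ℝ)
    (hH1 : IsHermitian l1 (⇑J1) k1) (hH2 : IsHermitian l2 (⇑J2) k2)
    (ρ1 : V₁ →ₗ[ℝ] Module.End ℝ V₂) (ρ2 : V₂ →ₗ[ℝ] Module.End ℝ V₁)
    (hd1 : ∀ x, IsDeriv l2 (ρ1 x)) (hd2 : ∀ a, IsDeriv l1 (ρ2 a))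
    (hrep1 : ∀ x y, ρ1 (l1 x y) = ρ1 x * ρ1 y - ρ1 y * ρ1 x)
    (hrep2 : ∀ a b, ρ2 (l2 a b) = ρ2 a * ρ2 b - ρ2 b * ρ2 a)
    (hcompat : Compat (fun x a => ρ1 x a) (fun a x => ρ2 a x))
    (hcomm1 : ∀ x : V₁, ρ1 x * J2 = J2 * ρ1 x)
    (hcomm2 : ∀ a : V₂, ρ2 a * J1 = J1 * ρ2 a)
    {ι₁ ι₂ : Type*} [Fintype ι₁] [DecidableEq ι₁] [Fintype ι₂] [DecidableEq ι₂]
    (b1 : Module.Basis ι₁ ℝ V₁) (hb1 : Orthonormal' k1 ⇑b1)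
    (b2 : Module.Basis ι₂ ℝ V₂) (hb2 : Orthonormal' k2 ⇑b2)
    (nab1 : V₁ → V₁ → V₁) (hnab1 : IsLeviCivita k1 l1 nab1)
    (nab2 : V₂ → V₂ → V₂) (hnab2 : IsLeviCivita k2 l2 nab2)
    (nab : V₁ × V₂ → V₁ × V₂ → V₁ × V₂)
    (hnab : IsLeviCivita (prodK k1 k2)
      (twBr l1 l2 (fun x a => ρ1 x a) (fun a x => ρ2 a x)) nab)
    :
    (∀ x : V₁,
      leeForm (Sum.elim (fun i => ((b1 i : V₁), (0 : V₂)))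
          (fun j => ((0 : V₁), (b2 j : V₂)))) nab (prodK k1 k2)
          (prodJ (⇑J1) (⇑J2)) (x, 0) =
        leeForm (⇑b1) nab1 k1 (⇑J1) x - LinearMap.trace ℝ V₂ (ρ1 x)) ∧
    (∀ a : V₂,
      leeForm (Sum.elim (fun i => ((b1 i : V₁), (0 : V₂)))
          (fun j => ((0 : V₁), (b2 j : V₂)))) nab (prodK k1 k2)
          (prodJ (⇑J1) (⇑J2)) (0, a) =
        leeForm (⇑b2) nab2 k2 (⇑J2) a - LinearMap.trace ℝ V₁ (ρ2 a)) := by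
  classical
  obtain ⟨⟨hk1bil, hk1sym, _⟩, hJ1sq, _, hk1J⟩ := hH1
  obtain ⟨⟨hk2bil, hk2sym, _⟩, hJ2sq, _, hk2J⟩ := hH2
  obtain ⟨hl1bil, hl1anti, _⟩ := hl1
  obtain ⟨hl2bil, hl2anti, _⟩ := hl2
  have hKsym : ∀ u v : V₁ × V₂, prodK k1 k2 u v = prodK k1 k2 v u := by
    intro u v; simp [prodK, hk1sym u.1 v.1, hk2sym u.2 v.2]
  have hKJ : ∀ u v : V₁ × V₂,
      prodK k1 k2 (prodJ (⇑J1) (⇑J2) u) (prodJ (⇑J1) (⇑J2) v) = prodK k1 k2 u v := by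
    intro u v; simp [prodK, prodJ, hk1J, hk2J]
  have hcanc1 : ∀ u f : V₁, k1 u (J1 f) + k1 (J1 u) f = 0 := by
    intro u f
    have h := hk1J (J1 u) f
    rw [hJ1sq u] at h
    have hneg := hk1bil.neg_left u (J1 f)
    linarith
  have hcanc2 : ∀ u f : V₂, k2 u (J2 f) + k2 (J2 u) f = 0 := by
    intro u f
    have h := hk2J (J2 u) f
    rw [hJ2sq u] at h
    have hneg := hk2bil.neg_left u (J2 f)
    linarith
  set E : ι₁ ⊕ ι₂ → V₁ × V₂ := Sum.elim (fun i => ((b1 i : V₁), (0 : V₂)))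
      (fun j => ((0 : V₁), (b2 j : V₂))) with hE
  have key1 : ∀ x : V₁,
      2 * leeForm E nab (prodK k1 k2) (prodJ (⇑J1) (⇑J2)) (x, 0)
        = 2 * leeForm (⇑b1) nab1 k1 (⇑J1) x - 2 * ∑ j, k2 (ρ1 x (b2 j)) (b2 j) := by
    intro x
    rw [two_mul_leeForm hKsym hKJ hnab E (x, 0),
        two_mul_leeForm hk1sym hk1J hnab1 (⇑b1) x,
        Fintype.sum_sum_type, neg_add, Finset.mul_sum, sub_eq_add_neg]
    congr 1
    · rw [neg_inj]
      refine Finset.sum_congr rfl fun i _ => ?_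
      simp [hE, twBr, prodK, prodJ, hl1bil.zero_left, hl1bil.zero_right,
        hl2bil.zero_left, hl2bil.zero_right, hk1bil.zero_left, hk1bil.zero_right,
        hk2bil.zero_left, hk2bil.zero_right, hk1bil.neg_left, hk2bil.neg_left]
    · rw [neg_inj]
      refine Finset.sum_congr rfl fun j _ => ?_
      have hco : ρ1 (J1 x) (J2 (b2 j)) = J2 (ρ1 (J1 x) (b2 j)) := by
        have h := DFunLike.congr_fun (hcomm1 (J1 x)) (b2 j)
        simpa [Module.End.mul_apply] using h
      have hc := hcanc2 (ρ1 (J1 x) (b2 j)) (b2 j)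
      simp only [hE, Sum.elim_inr, twBr, prodK, prodJ, map_zero, LinearMap.zero_apply]
      rw [hco] at *
      simp [hl1bil.zero_left, hl1bil.zero_right, hl2bil.zero_left, hl2bil.zero_right,
        hk1bil.zero_left, hk1bil.zero_right, hk2bil.zero_left, hk2bil.zero_right,
        hk1bil.neg_left, hk2bil.neg_left]
      linarith
  have key2 : ∀ a : V₂,
      2 * leeForm E nab (prodK k1 k2) (prodJ (⇑J1) (⇑J2)) (0, a)
        = 2 * leeForm (⇑b2) nab2 k2 (⇑J2) a - 2 * ∑ i, k1 (ρ2 a (b1 i)) (b1 i) := by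
    intro a
    rw [two_mul_leeForm hKsym hKJ hnab E (0, a),
        two_mul_leeForm hk2sym hk2J hnab2 (⇑b2) a,
        Fintype.sum_sum_type, neg_add, Finset.mul_sum, sub_eq_add_neg, add_comm]
    congr 1
    · rw [neg_inj]
      refine Finset.sum_congr rfl fun j _ => ?_
      simp [hE, twBr, prodK, prodJ, hl1bil.zero_left, hl1bil.zero_right,
        hl2bil.zero_left, hl2bil.zero_right, hk1bil.zero_left, hk1bil.zero_right,
        hk2bil.zero_left, hk2bil.zero_right, hk1bil.neg_left, hk2bil.neg_left]
    · rw [neg_inj]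
      refine Finset.sum_congr rfl fun i _ => ?_
      have hco : ρ2 (J2 a) (J1 (b1 i)) = J1 (ρ2 (J2 a) (b1 i)) := by
        have h := DFunLike.congr_fun (hcomm2 (J2 a)) (b1 i)
        simpa [Module.End.mul_apply] using h
      have hc := hcanc1 (ρ2 (J2 a) (b1 i)) (b1 i)
      simp only [hE, Sum.elim_inl, twBr, prodK, prodJ, map_zero, LinearMap.zero_apply]
      rw [hco] at *
      simp [hl1bil.zero_left, hl1bil.zero_right, hl2bil.zero_left, hl2bil.zero_right,
        hk1bil.zero_left, hk1bil.zero_right, hk2bil.zero_left, hk2bil.zero_right,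
        hk1bil.neg_left, hk2bil.neg_left]
      linarith
  constructor
  · intro x
    have h := key1 x
    have htr := trace_eq_sum_orthonormal hk2bil b2 hb2 (ρ1 x)
    linarith
  · intro a
    have h := key2 a
    have htr := trace_eq_sum_orthonormal hk1bil b1 hb1 (ρ2 a)
    linarith
end
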